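/- Let θ₁ > 0, β > 1, and let ξ(·,s) be nonnegative measurable on (0,∞) for each s. If Λ(μ,ν) ≥ θ₁(μ^β + ν^β) for all μ,ν > 0 and r ≥ 2, then ∫₀^∞ ∫₀^μ (r ν μ^{r−1} − ν^r) Λ(μ,ν) ξ(μ,s) ξ(ν,s) dν dμ ≥ (r−1) θ₁ ∫₀^∞ ∫₀^∞ μ ν^{β+r−1} ξ(μ,s) ξ(ν,s) dν dμ. -/
import Mathlib

open MeasureTheory Set
open scoped ENNReal

lemma key_sym (G : ℝ → ℝ → ℝ≥0∞) (hG : Measurable (Function.uncurry G)) :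
    ∫⁻ μ in Ioi (0:ℝ), ∫⁻ ν in Ioi (0:ℝ), G μ ν
      = (∫⁻ μ in Ioi (0:ℝ), ∫⁻ ν in Ioo 0 μ, G μ ν)
        + ∫⁻ μ in Ioi (0:ℝ), ∫⁻ ν in Ioo 0 μ, G ν μ := by
  set S : Set (ℝ × ℝ) := {p : ℝ × ℝ | 0 < p.2 ∧ p.2 < p.1} with hS
  have hSm : MeasurableSet S := by
    have : S = {p : ℝ × ℝ | 0 < p.2} ∩ {p : ℝ × ℝ | p.2 < p.1} := rfl
    rw [this]
    exact (measurableSet_lt measurable_const measurable_snd).inter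
      (measurableSet_lt measurable_snd measurable_fst)
  set T : Set (ℝ × ℝ) := {p : ℝ × ℝ | p.1 < p.2} with hT
  have hTm : MeasurableSet T := measurableSet_lt measurable_fst measurable_snd
  have hA : ∀ μ : ℝ, ∫⁻ ν in Ioo 0 μ, G μ ν
      = ∫⁻ ν in Ioi (0:ℝ), S.indicator (Function.uncurry G) (μ, ν) := by
    intro μ
    have h1 : ∀ ν, S.indicator (Function.uncurry G) (μ, ν)
        = (Ioo 0 μ).indicator (G μ) ν := by
      intro ν
      by_cases h : ν ∈ Ioo 0 μ
      · rw [indicator_of_mem (show (μ, ν) ∈ S from ⟨h.1, h.2⟩), indicator_of_mem h]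
        rfl
      · rw [indicator_of_notMem (show (μ, ν) ∉ S from fun hm => h ⟨hm.1, hm.2⟩),
          indicator_of_notMem h]
    simp_rw [h1]
    rw [lintegral_indicator measurableSet_Ioo, Measure.restrict_restrict measurableSet_Ioo,
      show Ioo (0:ℝ) μ ∩ Ioi 0 = Ioo 0 μ from inter_eq_left.mpr (fun x hx => hx.1)]
  have hB : ∀ μ : ℝ, 0 < μ → ∫⁻ ν in Ioi μ, G μ ν
      = ∫⁻ ν in Ioi (0:ℝ), T.indicator (Function.uncurry G) (μ, ν) := by
    intro μ hμ
    have h1 : ∀ ν, T.indicator (Function.uncurry G) (μ, ν)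
        = (Ioi μ).indicator (G μ) ν := by
      intro ν
      by_cases h : ν ∈ Ioi μ
      · rw [indicator_of_mem (show (μ, ν) ∈ T from h), indicator_of_mem h]
        rfl
      · rw [indicator_of_notMem (show (μ, ν) ∉ T from h), indicator_of_notMem h]
    simp_rw [h1]
    rw [lintegral_indicator measurableSet_Ioi, Measure.restrict_restrict measurableSet_Ioi,
      show Ioi μ ∩ Ioi (0:ℝ) = Ioi μ from inter_eq_left.mpr (fun x hx => lt_trans hμ hx)]
  have hsplit : ∀ μ : ℝ, 0 < μ → ∫⁻ ν in Ioi (0:ℝ), G μ ν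
      = (∫⁻ ν in Ioo 0 μ, G μ ν) + ∫⁻ ν in Ioi μ, G μ ν := by
    intro μ hμ
    have hunion : Ioi (0:ℝ) = Ioo 0 μ ∪ Ici μ := by
      ext x; simp only [mem_Ioi, mem_union, mem_Ioo, mem_Ici]
      constructor
      · intro hx
        rcases lt_or_ge x μ with h | h
        · exact Or.inl ⟨hx, h⟩
        · exact Or.inr h
      · rintro (⟨h, _⟩ | h)
        · exact h
        · exact lt_of_lt_of_le hμ h
    have hdisj : Disjoint (Ioo 0 μ) (Ici μ) := by
      rw [disjoint_left]; intro x hx hx'; exact absurd hx.2 (not_lt.mpr hx')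
    rw [hunion, lintegral_union measurableSet_Ici hdisj]
    congr 1
    exact setLIntegral_congr Ioi_ae_eq_Ici.symm
  calc ∫⁻ μ in Ioi (0:ℝ), ∫⁻ ν in Ioi (0:ℝ), G μ ν
      = ∫⁻ μ in Ioi (0:ℝ), ((∫⁻ ν in Ioo 0 μ, G μ ν) + ∫⁻ ν in Ioi μ, G μ ν) := by
        refine lintegral_congr_ae ((ae_restrict_iff' measurableSet_Ioi).mpr ?_)
        exact Filter.Eventually.of_forall (fun μ hμ => hsplit μ hμ)
    _ = (∫⁻ μ in Ioi (0:ℝ), ∫⁻ ν in Ioo 0 μ, G μ ν)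
        + ∫⁻ μ in Ioi (0:ℝ), ∫⁻ ν in Ioi μ, G μ ν := by
        simp_rw [hA]
        rw [lintegral_add_left]
        exact Measurable.lintegral_prod_right' (hG.indicator hSm)
    _ = (∫⁻ μ in Ioi (0:ℝ), ∫⁻ ν in Ioo 0 μ, G μ ν)
        + ∫⁻ μ in Ioi (0:ℝ), ∫⁻ ν in Ioo 0 μ, G ν μ := by
        congr 1
        calc ∫⁻ μ in Ioi (0:ℝ), ∫⁻ ν in Ioi μ, G μ ν
            = ∫⁻ μ in Ioi (0:ℝ), ∫⁻ ν in Ioi (0:ℝ),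
                T.indicator (Function.uncurry G) (μ, ν) := by
              refine lintegral_congr_ae ((ae_restrict_iff' measurableSet_Ioi).mpr ?_)
              exact Filter.Eventually.of_forall (fun μ hμ => hB μ hμ)
          _ = ∫⁻ ν in Ioi (0:ℝ), ∫⁻ μ in Ioi (0:ℝ),
                T.indicator (Function.uncurry G) (μ, ν) := by
              apply lintegral_lintegral_swap
              exact (hG.indicator hTm).aemeasurable
          _ = ∫⁻ ν in Ioi (0:ℝ), ∫⁻ μ in Ioo 0 ν, G μ ν := by
              refine lintegral_congr (fun ν => ?_)
              have h1 : ∀ μ : ℝ, T.indicator (Function.uncurry G) (μ, ν)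
                  = (Iio ν).indicator (fun μ => G μ ν) μ := by
                intro μ
                by_cases h : μ ∈ Iio ν
                · rw [indicator_of_mem (show (μ, ν) ∈ T from h), indicator_of_mem h]
                  rfl
                · rw [indicator_of_notMem (show (μ, ν) ∉ T from h), indicator_of_notMem h]
              simp_rw [h1]
              rw [lintegral_indicator measurableSet_Iio,
                Measure.restrict_restrict measurableSet_Iio]
              congr 1
              rw [inter_comm, Ioi_inter_Iio]

lemma pw_real (θ₁ β r : ℝ) (h1 : 0 < θ₁) (hβ : 1 < β) (hr : 2 ≤ r)
    {μ ν : ℝ} (hν : 0 < ν) (hνμ : ν < μ) :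
    (r - 1) * θ₁ * (μ * ν ^ (β + r - 1) + ν * μ ^ (β + r - 1))
      ≤ (r * ν * μ ^ (r - 1) - ν ^ r) * (θ₁ * (μ ^ β + ν ^ β)) := by
  have hμ : 0 < μ := hν.trans hνμ
  have hsplit : ∀ (x : ℝ), 0 < x → ∀ a b : ℝ, x ^ (a + b) = x ^ a * x ^ b :=
    fun x hx a b => Real.rpow_add hx a b
  have e1 : ν ^ r = ν * ν ^ (r - 1) := by
    calc ν ^ r = ν ^ (1 + (r - 1)) := by norm_num
      _ = ν ^ (1:ℝ) * ν ^ (r - 1) := hsplit ν hν 1 (r-1)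
      _ = ν * ν ^ (r - 1) := by rw [Real.rpow_one]
  have e2 : μ ^ (β + r - 1) = μ ^ β * μ ^ (r - 1) := by
    calc μ ^ (β + r - 1) = μ ^ (β + (r - 1)) := by ring_nf
      _ = μ ^ β * μ ^ (r - 1) := hsplit μ hμ β (r-1)
  have e3 : ν ^ (β + r - 1) = ν ^ β * ν * ν ^ (r - 2) := by
    calc ν ^ (β + r - 1) = ν ^ (β + (1 + (r - 2))) := by ring_nf
      _ = ν ^ β * ν ^ (1 + (r - 2)) := hsplit ν hν β (1 + (r-2))
      _ = ν ^ β * (ν ^ (1:ℝ) * ν ^ (r - 2)) := by rw [hsplit ν hν 1 (r-2)]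
      _ = ν ^ β * ν * ν ^ (r - 2) := by rw [Real.rpow_one]; ring
  have e4 : μ ^ (r - 1) = μ * μ ^ (r - 2) := by
    calc μ ^ (r - 1) = μ ^ (1 + (r - 2)) := by rw [show (1:ℝ) + (r - 2) = r - 1 by ring]
      _ = μ ^ (1:ℝ) * μ ^ (r - 2) := hsplit μ hμ 1 (r-2)
      _ = μ * μ ^ (r - 2) := by rw [Real.rpow_one]
  have hdc : ν ^ (r - 1) ≤ μ ^ (r - 1) :=
    Real.rpow_le_rpow hν.le hνμ.le (by linarith)
  have hfe : ν ^ (r - 2) ≤ μ ^ (r - 2) :=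
    Real.rpow_le_rpow hν.le hνμ.le (by linarith)
  have pβμ : 0 < μ ^ β := Real.rpow_pos_of_pos hμ β
  have pβν : 0 < ν ^ β := Real.rpow_pos_of_pos hν β
  have pc : 0 < μ ^ (r - 1) := Real.rpow_pos_of_pos hμ _
  have pd : 0 < ν ^ (r - 1) := Real.rpow_pos_of_pos hν _
  have pe : 0 < μ ^ (r - 2) := Real.rpow_pos_of_pos hμ _
  have pf : 0 < ν ^ (r - 2) := Real.rpow_pos_of_pos hν _
  -- key1 : the bracket dominates (r-1) ν μ^{r-1}
  have key1 : (r - 1) * (ν * μ ^ (r - 1)) ≤ r * ν * μ ^ (r - 1) - ν ^ r := by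
    have h' : ν * ν ^ (r - 1) ≤ ν * μ ^ (r - 1) :=
      mul_le_mul_of_nonneg_left hdc hν.le
    rw [e1]; nlinarith
  -- key2
  have key2 : μ * ν ^ (β + r - 1) + ν * μ ^ (β + r - 1)
      ≤ ν * μ ^ (r - 1) * (μ ^ β + ν ^ β) := by
    rw [e2, e3, e4]
    have h' : μ * ν ^ (r - 2) ≤ μ * μ ^ (r - 2) := mul_le_mul_of_nonneg_left hfe hμ.le
    nlinarith [mul_nonneg (mul_nonneg hν.le pβν.le) (sub_nonneg.mpr hfe),
      mul_pos hμ (mul_pos hν pβν)]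
  calc (r - 1) * θ₁ * (μ * ν ^ (β + r - 1) + ν * μ ^ (β + r - 1))
      ≤ (r - 1) * θ₁ * (ν * μ ^ (r - 1) * (μ ^ β + ν ^ β)) := by
        apply mul_le_mul_of_nonneg_left key2
        have : (1:ℝ) ≤ r - 1 := by linarith
        positivity
    _ = ((r - 1) * (ν * μ ^ (r - 1))) * (θ₁ * (μ ^ β + ν ^ β)) := by ring
    _ ≤ (r * ν * μ ^ (r - 1) - ν ^ r) * (θ₁ * (μ ^ β + ν ^ β)) := by
        apply mul_le_mul_of_nonneg_right key1
        positivity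

lemma meas_aux (G : ℝ → ℝ → ℝ≥0∞) (hG : Measurable (Function.uncurry G)) :
    Measurable (fun μ => ∫⁻ ν in Ioo 0 μ, G μ ν) := by
  set S : Set (ℝ × ℝ) := {p : ℝ × ℝ | 0 < p.2 ∧ p.2 < p.1} with hS
  have hSm : MeasurableSet S := by
    have : S = {p : ℝ × ℝ | 0 < p.2} ∩ {p : ℝ × ℝ | p.2 < p.1} := rfl
    rw [this]
    exact (measurableSet_lt measurable_const measurable_snd).inter
      (measurableSet_lt measurable_snd measurable_fst)
  have hA : ∀ μ : ℝ, ∫⁻ ν in Ioo 0 μ, G μ ν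
      = ∫⁻ ν, S.indicator (Function.uncurry G) (μ, ν) := by
    intro μ
    have h1 : ∀ ν, S.indicator (Function.uncurry G) (μ, ν)
        = (Ioo 0 μ).indicator (G μ) ν := by
      intro ν
      by_cases h : ν ∈ Ioo 0 μ
      · rw [indicator_of_mem (show (μ, ν) ∈ S from ⟨h.1, h.2⟩), indicator_of_mem h]
        rfl
      · rw [indicator_of_notMem (show (μ, ν) ∉ S from fun hm => h ⟨hm.1, hm.2⟩),
          indicator_of_notMem h]
    simp_rw [h1]
    rw [lintegral_indicator measurableSet_Ioo]
  simp_rw [hA]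
  exact Measurable.lintegral_prod_right' (hG.indicator hSm)

lemma key_sym2 (G : ℝ → ℝ → ℝ≥0∞) (hG : Measurable (Function.uncurry G)) :
    ∫⁻ μ in Ioi (0:ℝ), ∫⁻ ν in Ioi (0:ℝ), G μ ν
      = ∫⁻ μ in Ioi (0:ℝ), ∫⁻ ν in Ioo 0 μ, (G μ ν + G ν μ) := by
  rw [key_sym G hG]
  have h2 : ∀ μ : ℝ, ∫⁻ ν in Ioo 0 μ, (G μ ν + G ν μ)
      = (∫⁻ ν in Ioo 0 μ, G μ ν) + ∫⁻ ν in Ioo 0 μ, G ν μ := by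
    intro μ
    exact lintegral_add_left (hG.comp measurable_prodMk_left) _
  simp_rw [h2]
  rw [lintegral_add_left (meas_aux G hG)]

lemma bracket_nonneg (r : ℝ) (hr : 2 ≤ r) {μ ν : ℝ} (hν : 0 < ν) (hνμ : ν < μ) :
    0 ≤ r * ν * μ ^ (r - 1) - ν ^ r := by
  have hμ : 0 < μ := hν.trans hνμ
  have e1 : ν ^ r = ν * ν ^ (r - 1) := by
    calc ν ^ r = ν ^ (1 + (r - 1)) := by norm_num
      _ = ν ^ (1:ℝ) * ν ^ (r - 1) := Real.rpow_add hν 1 (r - 1)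
      _ = ν * ν ^ (r - 1) := by rw [Real.rpow_one]
  have hdc : ν ^ (r - 1) ≤ μ ^ (r - 1) :=
    Real.rpow_le_rpow hν.le hνμ.le (by linarith)
  have hpc : 0 < μ ^ (r - 1) := Real.rpow_pos_of_pos hμ _
  rw [e1]
  nlinarith [mul_le_mul_of_nonneg_left hdc hν.le,
    mul_le_mul_of_nonneg_right hr (mul_pos hν hpc).le]

theorem stmt8 (θ₁ β r : ℝ) (h1 : 0 < θ₁) (hβ : 1 < β) (hr : 2 ≤ r)
    (Λ : ℝ → ℝ → ℝ≥0∞) (hΛmeas : Measurable (Function.uncurry Λ))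
    (ξ : ℝ → ℝ≥0∞) (hξ : Measurable ξ)
    (hΛ : ∀ μ ν : ℝ, 0 < μ → 0 < ν → ENNReal.ofReal (θ₁ * (μ ^ β + ν ^ β)) ≤ Λ μ ν) :
    ENNReal.ofReal ((r - 1) * θ₁) *
        ∫⁻ μ in Ioi (0:ℝ), ∫⁻ ν in Ioi (0:ℝ),
          ENNReal.ofReal (μ * ν ^ (β + r - 1)) * ξ μ * ξ ν ≤
      ∫⁻ μ in Ioi (0:ℝ), ∫⁻ ν in Ioo 0 μ,
        ENNReal.ofReal (r * ν * μ ^ (r - 1) - ν ^ r) * Λ μ ν * ξ μ * ξ ν := by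
  have hp : Measurable fun x : ℝ => x ^ (β + r - 1) := by fun_prop
  set G : ℝ → ℝ → ℝ≥0∞ :=
    fun μ ν => ENNReal.ofReal (μ * ν ^ (β + r - 1)) * ξ μ * ξ ν with hGdef
  have hGmeas : Measurable (Function.uncurry G) := by
    apply Measurable.mul
    apply Measurable.mul
    · exact ENNReal.measurable_ofReal.comp (measurable_fst.mul (hp.comp measurable_snd))
    · exact hξ.comp measurable_fst
    · exact hξ.comp measurable_snd
  rw [key_sym2 G hGmeas, ← lintegral_const_mul' _ _ ENNReal.ofReal_ne_top]
  refine lintegral_mono_ae ((ae_restrict_iff' measurableSet_Ioi).mpr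
    (Filter.Eventually.of_forall fun μ hμ => ?_))
  rw [← lintegral_const_mul' _ _ ENNReal.ofReal_ne_top]
  refine lintegral_mono_ae ((ae_restrict_iff' measurableSet_Ioo).mpr
    (Filter.Eventually.of_forall fun ν hν => ?_))
  obtain ⟨hν0, hνμ⟩ := hν
  have hμ0 : (0:ℝ) < μ := hμ
  have hnn1 : 0 ≤ μ * ν ^ (β + r - 1) := by positivity
  have hnn2 : 0 ≤ ν * μ ^ (β + r - 1) := by positivity
  have hbr : 0 ≤ (r - 1) * θ₁ := by nlinarith
  have hsub : 0 ≤ r * ν * μ ^ (r - 1) - ν ^ r := bracket_nonneg r hr hν0 hνμ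
  calc ENNReal.ofReal ((r - 1) * θ₁) * (G μ ν + G ν μ)
      = ENNReal.ofReal ((r - 1) * θ₁) *
          (ENNReal.ofReal (μ * ν ^ (β + r - 1) + ν * μ ^ (β + r - 1)) * (ξ μ * ξ ν)) := by
        simp only [hGdef]
        rw [ENNReal.ofReal_add hnn1 hnn2]
        ring
    _ = ENNReal.ofReal ((r - 1) * θ₁ * (μ * ν ^ (β + r - 1) + ν * μ ^ (β + r - 1)))
          * (ξ μ * ξ ν) := by
        rw [ENNReal.ofReal_mul hbr, mul_assoc]
    _ ≤ ENNReal.ofReal ((r * ν * μ ^ (r - 1) - ν ^ r) * (θ₁ * (μ ^ β + ν ^ β)))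
          * (ξ μ * ξ ν) := by
        exact mul_le_mul_left
          (ENNReal.ofReal_le_ofReal (pw_real θ₁ β r h1 hβ hr hν0 hνμ)) _
    _ = ENNReal.ofReal (r * ν * μ ^ (r - 1) - ν ^ r)
          * ENNReal.ofReal (θ₁ * (μ ^ β + ν ^ β)) * (ξ μ * ξ ν) := by
        rw [ENNReal.ofReal_mul hsub]
    _ ≤ ENNReal.ofReal (r * ν * μ ^ (r - 1) - ν ^ r) * Λ μ ν * (ξ μ * ξ ν) := by
        gcongr
        exact hΛ μ ν hμ0 hν0
    _ = ENNReal.ofReal (r * ν * μ ^ (r - 1) - ν ^ r) * Λ μ ν * ξ μ * ξ ν := by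
        ring
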